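/- Riccati-type decay estimate: Let N ≥ 1 be an integer and let c₀ > 0, C₁ ≥ 0, T₀ ≥ 1, X₀ ≥ 0 be real numbers. Then there exists a constant c > 0, depending only on N, c₀, C₁ and X₀, with the following property: if β : [0,∞) → ℂ is continuously differentiable, satisfies |β(0)| ≤ X₀·T₀^{−1/(2N)}, and for all t ≥ 0 the differential inequality (1/2) d/dt |β(t)|² = Re( conj(β(t)) · β'(t) ) ≤ −c₀ |β(t)|^{2N+2} + C₁ (T₀+t)^{−(2N+2)/(2N)} |β(t)| holds, then |β(t)| ≤ c (T₀+t)^{−1/(2N)} for all t ≥ 0. -/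

import Mathlib

open Filter Topology Set

private lemma rpow_sq' (x p : ℝ) (hx : 0 < x) : (x ^ p) ^ 2 = x ^ (2 * p) := by
  rw [← Real.rpow_natCast (x ^ p) 2, ← Real.rpow_mul hx.le]
  norm_num [mul_comm]

private lemma hasDerivAt_norm_sq_complex (β : ℝ → ℂ) (hβ : Differentiable ℝ β) (t : ℝ) :
    HasDerivAt (fun s => ‖β s‖ ^ 2)
      (2 * ((starRingEnd ℂ) (β t) * deriv β t).re) t := by
  have hβ' : HasDerivAt β (deriv β t) t := (hβ t).hasDerivAt
  have hu : HasDerivAt (fun s => (β s).re) ((deriv β t).re) t :=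
    (Complex.reCLM.hasFDerivAt.comp_hasDerivAt t hβ')
  have hv : HasDerivAt (fun s => (β s).im) ((deriv β t).im) t :=
    (Complex.imCLM.hasFDerivAt.comp_hasDerivAt t hβ')
  have h := ((hu.pow 2).add (hv.pow 2))
  have heq : (fun s => (β s).re ^ 2 + (β s).im ^ 2) = fun s => ‖β s‖ ^ 2 := by
    funext s
    rw [Complex.sq_norm, Complex.normSq_apply]; ring
  rw [show ((fun s => (β s).re) ^ 2 + (fun s => (β s).im) ^ 2) = fun s => ‖β s‖ ^ 2 from heq] at h
  refine h.congr_deriv ?_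
  simp [Complex.mul_re]
  ring


private lemma key_const_neg (c₀ C₁ c n q : ℝ) (m : ℕ) (hc₀ : 0 < c₀) (hC₁ : 0 ≤ C₁)
    (hc1 : 1 ≤ c) (hcC : C₁ + 2 ≤ c₀ * c) (hn1 : 1 ≤ n)
    (hq : -(2 * q) = 1 / n) (hm : c ≤ c ^ m) :
    -(2 * c₀) * c ^ (m + 2) + 2 * C₁ * c - 2 * q * c ^ 2 < 0 := by
  have hcpos : (0 : ℝ) < c := lt_of_lt_of_le one_pos hc1
  have hn0 : (0 : ℝ) < n := lt_of_lt_of_le one_pos hn1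
  have h1 : c ^ (m + 2) = c ^ m * c * c := by ring
  have hK : c₀ * c ^ (m + 2) ≥ (C₁ + 2) * c * c := by
    rw [h1]
    nlinarith [mul_nonneg (mul_nonneg (by linarith : (0:ℝ) ≤ C₁ + 2) hcpos.le)
        (sub_nonneg.2 hm),
      mul_nonneg (sub_nonneg.2 hcC) (mul_nonneg (le_trans hcpos.le hm) hcpos.le)]
  have hq1 : -(2 * q) ≤ 1 := by
    rw [hq]
    exact div_le_one_of_le₀ hn1 hn0.le
  have hq2 : -(2 * q) * c ^ 2 ≤ c ^ 2 := by nlinarith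
  have hCc : C₁ * c ≤ C₁ * (c * c) :=
    mul_le_mul_of_nonneg_left (by nlinarith) hC₁
  nlinarith

private lemma first_crossing (f : ℝ → ℝ)
    (hd : ∀ t, 0 ≤ t → DifferentiableAt ℝ f t)
    (h0 : f 0 < 0)
    (hkey : ∀ t, 0 ≤ t → f t = 0 → deriv f t < 0) :
    ∀ t, 0 ≤ t → f t < 0 := by
  by_contra h
  push_neg at h
  obtain ⟨t, ht0, htf⟩ := h
  set S : Set ℝ := {s | 0 ≤ s ∧ 0 ≤ f s} with hS
  have hne : S.Nonempty := ⟨t, ht0, htf⟩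
  have hbdd : BddBelow S := ⟨0, fun s hs => hs.1⟩
  set t₁ := sInf S with ht₁
  have ht₁0 : 0 ≤ t₁ := le_csInf hne fun s hs => hs.1
  have hcont : ∀ s, 0 ≤ s → ContinuousAt f s := fun s hs => (hd s hs).continuousAt
  have hft₁_nonneg : 0 ≤ f t₁ := by
    obtain ⟨u, hu_anti, hu_tendsto, hu_mem⟩ := exists_seq_tendsto_sInf hne hbdd
    exact ge_of_tendsto ((hcont t₁ ht₁0).tendsto.comp hu_tendsto)
      (Eventually.of_forall fun n => (hu_mem n).2)
  have ht₁pos : 0 < t₁ := by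
    rcases lt_or_eq_of_le ht₁0 with h' | h'
    · exact h'
    · exfalso; rw [← h'] at hft₁_nonneg; linarith
  have hleft : ∀ s, 0 ≤ s → s < t₁ → f s < 0 := by
    intro s hs0 hst
    by_contra hfs
    push_neg at hfs
    exact absurd (csInf_le hbdd ⟨hs0, hfs⟩) (not_le.2 hst)
  have hft₁_le : f t₁ ≤ 0 := by
    have htend : Tendsto f (𝓝[<] t₁) (𝓝 (f t₁)) :=
      ((hcont t₁ ht₁0).tendsto).mono_left nhdsWithin_le_nhds
    refine le_of_tendsto htend ?_
    have h1 : ∀ᶠ s in 𝓝[<] t₁, 0 < s :=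
      eventually_nhdsWithin_of_eventually_nhds (eventually_gt_nhds ht₁pos)
    have h2 : ∀ᶠ s in 𝓝[<] t₁, s < t₁ := eventually_mem_nhdsWithin
    filter_upwards [h1, h2] with s hs1 hs2
    exact (hleft s hs1.le hs2).le
  have hft₁ : f t₁ = 0 := le_antisymm hft₁_le hft₁_nonneg
  have hderiv := hkey t₁ ht₁0 hft₁
  have hHD : HasDerivAt f (deriv f t₁) t₁ := (hd t₁ ht₁0).hasDerivAt
  rw [hasDerivAt_iff_tendsto_slope] at hHD
  have h2 : Tendsto (slope f t₁) (𝓝[<] t₁) (𝓝 (deriv f t₁)) :=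
    hHD.mono_left (nhdsWithin_mono _ fun s hs => ne_of_lt hs)
  have hge : 0 ≤ deriv f t₁ := by
    refine ge_of_tendsto h2 ?_
    have h1 : ∀ᶠ s in 𝓝[<] t₁, 0 < s :=
      eventually_nhdsWithin_of_eventually_nhds (eventually_gt_nhds ht₁pos)
    have h3 : ∀ᶠ s in 𝓝[<] t₁, s < t₁ := eventually_mem_nhdsWithin
    filter_upwards [h1, h3] with s hs1 hs3
    rw [slope_def_field, hft₁, sub_zero]
    have hfs : f s < 0 := hleft s hs1.le hs3
    have hden : s - t₁ < 0 := by linarith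
    exact div_nonneg_of_nonpos hfs.le hden.le
  linarith

/-- Riccati-type decay estimate: if `(1/2) d/dt |β|² = Re(β̄ β') ≤ -c₀|β|^{2N+2}
+ C₁(T₀+t)^{-(2N+2)/(2N)}|β|` and `|β(0)| ≤ X₀ T₀^{-1/(2N)}`, then
`|β(t)| ≤ c (T₀+t)^{-1/(2N)}` with `c` depending only on `N, c₀, C₁, X₀`. -/
theorem riccati_decay (N : ℕ) (hN : 1 ≤ N) (c₀ C₁ X₀ : ℝ)
    (hc₀ : 0 < c₀) (hC₁ : 0 ≤ C₁) (hX₀ : 0 ≤ X₀) :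
    ∃ c : ℝ, 0 < c ∧
      ∀ T₀ : ℝ, 1 ≤ T₀ →
        ∀ β : ℝ → ℂ, Differentiable ℝ β → Continuous (deriv β) →
          ‖β 0‖ ≤ X₀ * T₀ ^ (-(1 / (2 * (N : ℝ)))) →
          (∀ t : ℝ, 0 ≤ t →
            ((starRingEnd ℂ) (β t) * deriv β t).re ≤
              -c₀ * ‖β t‖ ^ (2 * N + 2) +
                C₁ * (T₀ + t) ^ (-((2 * (N : ℝ) + 2) / (2 * (N : ℝ)))) * ‖β t‖) →
          ∀ t : ℝ, 0 ≤ t → ‖β t‖ ≤ c * (T₀ + t) ^ (-(1 / (2 * (N : ℝ)))) := by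
  have hn1 : (1 : ℝ) ≤ (N : ℝ) := by exact_mod_cast hN
  have hn0 : (0 : ℝ) < (N : ℝ) := by linarith
  set n : ℝ := (N : ℝ) with hn
  set c : ℝ := max (X₀ + 1) ((C₁ + 2) / c₀) with hc_def
  have hc1 : 1 ≤ c := le_trans (by linarith) (le_max_left _ _)
  have hcpos : 0 < c := by linarith
  have hX₀c : X₀ < c := lt_of_lt_of_le (by linarith) (le_max_left _ _)
  have hcC : C₁ + 2 ≤ c₀ * c := by
    have h1 : (C₁ + 2) / c₀ ≤ c := le_max_right _ _
    calc C₁ + 2 = c₀ * ((C₁ + 2) / c₀) := by field_simp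
    _ ≤ c₀ * c := by nlinarith
  refine ⟨c, hcpos, ?_⟩
  intro T₀ hT₀ β hβdiff hβderiv hβ0 hode
  set q : ℝ := -(1 / (2 * n)) with hq
  set r : ℝ := -((2 * n + 2) / (2 * n)) with hr
  have hqneg : q ≤ 0 := by
    rw [hq]; simp; positivity
  have hT₀pos : (0 : ℝ) < T₀ := by linarith
  set f : ℝ → ℝ := fun s => ‖β s‖ ^ 2 - c ^ 2 * (T₀ + s) ^ (2 * q) with hf
  -- derivative of f on [0, ∞)
  have hfderiv : ∀ s : ℝ, 0 ≤ s →
      HasDerivAt f (2 * ((starRingEnd ℂ) (β s) * deriv β s).re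
        - c ^ 2 * (2 * q * (T₀ + s) ^ (2 * q - 1))) s := by
    intro s hs
    have hx : (0 : ℝ) < T₀ + s := by linarith
    have h1 : HasDerivAt (fun u : ℝ => T₀ + u) 1 s := (hasDerivAt_id s).const_add T₀
    have h2 : HasDerivAt (fun y : ℝ => y ^ (2 * q))
        (2 * q * (T₀ + s) ^ (2 * q - 1)) (T₀ + s) :=
      Real.hasDerivAt_rpow_const (Or.inl hx.ne')
    have h3 : HasDerivAt (fun u : ℝ => (T₀ + u) ^ (2 * q))
        (2 * q * (T₀ + s) ^ (2 * q - 1) * 1) s := h2.comp s h1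
    rw [mul_one] at h3
    exact (hasDerivAt_norm_sq_complex β hβdiff s).sub (h3.const_mul (c ^ 2))
  -- f is negative at 0
  have h0 : f 0 < 0 := by
    have hrs : (T₀ ^ q) ^ 2 = T₀ ^ (2 * q) := rpow_sq' T₀ q hT₀pos
    have hb0 : ‖β 0‖ ^ 2 ≤ X₀ ^ 2 * T₀ ^ (2 * q) := by
      have := pow_le_pow_left₀ (norm_nonneg _) hβ0 2
      rw [mul_pow, hrs] at this
      exact this
    have hpos : (0 : ℝ) < T₀ ^ (2 * q) := Real.rpow_pos_of_pos hT₀pos _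
    have hX2 : X₀ ^ 2 < c ^ 2 := by nlinarith
    have : ‖β 0‖ ^ 2 < c ^ 2 * T₀ ^ (2 * q) := lt_of_le_of_lt hb0 (by nlinarith)
    simp only [hf, add_zero]
    linarith
  -- key: at a crossing the derivative is negative
  have hkey : ∀ s : ℝ, 0 ≤ s → f s = 0 → deriv f s < 0 := by
    intro s hs hfs
    have hx0 : (0 : ℝ) < T₀ + s := by linarith
    have hx1 : (1 : ℝ) ≤ T₀ + s := by linarith
    have hD := hfderiv s hs
    rw [hD.deriv]
    set x := T₀ + s with hxdef
    -- norm at the crossing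
    have hxq_pos : (0 : ℝ) < x ^ q := Real.rpow_pos_of_pos hx0 _
    have hnorm : ‖β s‖ = c * x ^ q := by
      have h1 : ‖β s‖ ^ 2 = (c * x ^ q) ^ 2 := by
        have h0' : ‖β s‖ ^ 2 - c ^ 2 * (T₀ + s) ^ (2 * q) = 0 := hfs
        have h0'' := sub_eq_zero.mp h0'
        rw [h0'', mul_pow, rpow_sq' x q hx0]
      calc ‖β s‖ = Real.sqrt (‖β s‖ ^ 2) := (Real.sqrt_sq (norm_nonneg _)).symm
      _ = Real.sqrt ((c * x ^ q) ^ 2) := by rw [h1]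
      _ = c * x ^ q := Real.sqrt_sq (by positivity)
    -- bound the ODE term
    have hode' := hode s hs
    rw [hnorm] at hode'
    have hexp2 : q * ((2 * N + 2 : ℕ) : ℝ) = r := by
      push_cast
      rw [hq, hr]
      field_simp
      rw [hn]
    have hpow : (c * x ^ q) ^ (2 * N + 2) = c ^ (2 * N + 2) * x ^ r := by
      rw [mul_pow, ← Real.rpow_natCast (x ^ q) (2 * N + 2),
        ← Real.rpow_mul hx0.le, hexp2]
    have hq_le_one : x ^ q ≤ 1 :=
      Real.rpow_le_one_of_one_le_of_nonpos hx1 hqneg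
    have hxr_pos : (0 : ℝ) < x ^ r := Real.rpow_pos_of_pos hx0 _
    have hbd : ((starRingEnd ℂ) (β s) * deriv β s).re ≤
        -c₀ * (c ^ (2 * N + 2) * x ^ r) + C₁ * x ^ r * c := by
      refine le_trans hode' ?_
      rw [hpow]
      have h1 : c * x ^ q ≤ c := by nlinarith
      have h2 : C₁ * x ^ r * (c * x ^ q) ≤ C₁ * x ^ r * c :=
        mul_le_mul_of_nonneg_left h1 (by positivity)
      linarith
    -- barrier exponent: 2q - 1 = r
    have hexp : 2 * q - 1 = r := by
      rw [hq, hr]; field_simp; ring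
    rw [hexp]
    -- the constant is strictly negative
    have hqval : -(2 * q) = 1 / n := by rw [hq]; field_simp
    -- put it together
    have htotal : 2 * ((starRingEnd ℂ) (β s) * deriv β s).re
        - c ^ 2 * (2 * q * x ^ r) ≤
        x ^ r * (-(2 * c₀) * c ^ (2 * N + 2) + 2 * C₁ * c - 2 * q * c ^ 2) := by
      have h1 : 2 * ((starRingEnd ℂ) (β s) * deriv β s).re
          - c ^ 2 * (2 * q * x ^ r) ≤
          2 * (-c₀ * (c ^ (2 * N + 2) * x ^ r) + C₁ * x ^ r * c)
            - c ^ 2 * (2 * q * x ^ r) := by linarith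
      refine h1.trans (le_of_eq ?_)
      ring
    have hconst : -(2 * c₀) * c ^ (2 * N + 2) + 2 * C₁ * c - 2 * q * c ^ 2 < 0 :=
      key_const_neg c₀ C₁ c n q (2 * N) hc₀ hC₁ hc1 hcC hn1 hqval
        (le_self_pow₀ hc1 (by omega))
    calc 2 * ((starRingEnd ℂ) (β s) * deriv β s).re
        - c ^ 2 * (2 * q * x ^ r) ≤
        x ^ r * (-(2 * c₀) * c ^ (2 * N + 2) + 2 * C₁ * c - 2 * q * c ^ 2) := htotal
    _ < 0 := mul_neg_of_pos_of_neg hxr_pos hconst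
  -- apply the crossing lemma
  have hneg := first_crossing f (fun s hs => (hfderiv s hs).differentiableAt) h0 hkey
  intro t ht
  have hx0 : (0 : ℝ) < T₀ + t := by linarith
  have hft := hneg t ht
  have h1 : ‖β t‖ ^ 2 ≤ (c * (T₀ + t) ^ q) ^ 2 := by
    have h2 : (c * (T₀ + t) ^ q) ^ 2 = c ^ 2 * (T₀ + t) ^ (2 * q) := by
      rw [mul_pow, rpow_sq' _ q hx0]
    rw [h2]
    simp only [hf] at hft
    linarith
  calc ‖β t‖ = Real.sqrt (‖β t‖ ^ 2) := (Real.sqrt_sq (norm_nonneg _)).symm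
  _ ≤ Real.sqrt ((c * (T₀ + t) ^ q) ^ 2) := Real.sqrt_le_sqrt h1
  _ = c * (T₀ + t) ^ q := Real.sqrt_sq (by positivity)
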